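/- Let T be a nonempty convex subset of a finite-dimensional real inner product space E, and let {d_t}_{t∈T} be a family of linear maps d_t : E → ℝ. Then there exists a convex function G : T → ℝ such that d_t is a subgradient of G at t for every t ∈ T if and only if {d_t} satisfies both: (i) local WMON: for every t ∈ T there is an open set U ⊆ E containing t such that d_x(x' − x) ≤ d_{x'}(x' − x) for all x, x' ∈ U ∩ T; and (ii) path independence ('vortex-freeness'): for all x, y, z ∈ T, ∫₀¹ d_{x+s(y−x)}(y − x) ds + ∫₀¹ d_{y+s(z−y)}(z − y) ds = ∫₀¹ d_{x+s(z−x)}(z − x) ds, where each integrand s ↦ d_{a+s(b−a)}(b − a) for a, b ∈ T is assumed integrable on [0,1]. -/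

import Mathlib

open Set MeasureTheory

lemma AK_monotoneOn_of_locally {m : ℝ → ℝ}
    (h : ∀ c ∈ Set.Icc (0:ℝ) 1, ∃ ε > 0, ∀ u ∈ Set.Icc (0:ℝ) 1, ∀ v ∈ Set.Icc (0:ℝ) 1,
      |u - c| < ε → |v - c| < ε → u ≤ v → m u ≤ m v) :
    MonotoneOn m (Set.Icc (0:ℝ) 1) := by
  set S : Set ℝ := {s | s ∈ Set.Icc (0:ℝ) 1 ∧ MonotoneOn m (Set.Icc 0 s)} with hS
  have h0 : (0:ℝ) ∈ S := by
    refine ⟨⟨le_refl _, zero_le_one⟩, ?_⟩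
    intro u hu v hv _
    have : u = v := by
      have := hu.1; have := hu.2; have := hv.1; have := hv.2; linarith
    rw [this]
  have hsub : S ⊆ Set.Icc (0:ℝ) 1 := fun s hs => hs.1
  have hbdd : BddAbove S := ⟨1, fun s hs => (hsub hs).2⟩
  have hne : S.Nonempty := ⟨0, h0⟩
  set c := sSup S with hc
  have hc0 : 0 ≤ c := le_csSup hbdd h0
  have hc1 : c ≤ 1 := csSup_le hne (fun s hs => (hsub hs).2)
  obtain ⟨ε, hε, hloc⟩ := h c ⟨hc0, hc1⟩
  obtain ⟨t, htS, htgt⟩ : ∃ t ∈ S, c - ε < t := by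
    rcases exists_lt_of_lt_csSup hne (by linarith : c - ε < c) with ⟨t, htS, ht⟩
    exact ⟨t, htS, ht⟩
  have htle : t ≤ c := le_csSup hbdd htS
  have ht01 : t ∈ Set.Icc (0:ℝ) 1 := hsub htS
  set r := min 1 (c + ε/2) with hr
  have hrS : r ∈ S := by
    refine ⟨⟨le_min (by linarith) (by linarith), min_le_left _ _⟩, ?_⟩
    intro u hu v hv huv
    have hu0 : 0 ≤ u := hu.1
    have hur : u ≤ r := hu.2
    have hvr : v ≤ r := hv.2
    have hu1 : u ≤ 1 := le_trans hur (min_le_left _ _)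
    have hv1 : v ≤ 1 := le_trans hvr (min_le_left _ _)
    have hvε : v ≤ c + ε/2 := le_trans hvr (min_le_right _ _)
    by_cases hvt : v ≤ t
    · exact htS.2 ⟨hu0, le_trans huv hvt⟩ ⟨le_trans hu0 huv, hvt⟩ huv
    · push_neg at hvt
      have hvb : |v - c| < ε := by
        rw [abs_lt]; constructor <;> [linarith; linarith]
      by_cases hu' : c - ε < u
      · have hub : |u - c| < ε := by
          rw [abs_lt]
          constructor
          · linarith
          · have : u ≤ c + ε/2 := le_trans hur (min_le_right _ _); linarith
        exact hloc u ⟨hu0, hu1⟩ v ⟨le_trans hu0 huv, hv1⟩ hub hvb huv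
      · push_neg at hu'
        have hut : u ≤ t := by linarith
        have h1 : m u ≤ m t := htS.2 ⟨hu0, hut⟩ ⟨ht01.1, le_refl _⟩ hut
        have h2 : m t ≤ m v := by
          refine hloc t ht01 v ⟨le_trans hu0 huv, hv1⟩ ?_ hvb (by linarith)
          rw [abs_lt]; constructor <;> [linarith; linarith]
        linarith
  have hrc : r ≤ c := le_csSup hbdd hrS
  have hceq : c = 1 := by
    by_contra hcn
    have hclt : c < 1 := lt_of_le_of_ne hc1 hcn
    have : c < r := lt_min hclt (by linarith)
    linarith
  have : r = 1 := by rw [hr, hceq]; exact min_eq_left (by linarith)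
  exact this ▸ hrS.2

lemma AK_integral_eq_of_subgrad {φ m : ℝ → ℝ}
    (hm : IntervalIntegrable m MeasureTheory.volume 0 1)
    (h : ∀ s ∈ Set.Icc (0:ℝ) 1, ∀ s' ∈ Set.Icc (0:ℝ) 1, φ s + m s * (s' - s) ≤ φ s') :
    ∫ s in (0:ℝ)..1, m s = φ 1 - φ 0 := by
  have hmono : MonotoneOn m (Set.Icc (0:ℝ) 1) := by
    intro s hs s' hs' hss'
    rcases eq_or_lt_of_le hss' with rfl | hlt
    · exact le_refl _
    · have h1 := h s hs s' hs'
      have h2 := h s' hs' s hs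
      nlinarith
  have key : ∀ n : ℕ, 0 < n →
      |(∫ s in (0:ℝ)..1, m s) - (φ 1 - φ 0)| ≤ (m 1 - m 0) / n := by
    intro n hn
    have hn' : (0:ℝ) < n := Nat.cast_pos.mpr hn
    set f : ℕ → ℝ := fun k => (k : ℝ) / n with hf
    have hf0 : f 0 = 0 := by simp [hf]
    have hfn : f n = 1 := by simp only [hf]; exact div_self hn'.ne'
    have hpt : ∀ k ≤ n, f k ∈ Set.Icc (0:ℝ) 1 := by
      intro k hk
      constructor
      · positivity
      · rw [div_le_one hn']; exact_mod_cast hk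
    have hle : ∀ j k : ℕ, j ≤ k → f j ≤ f k := by
      intro j k hjk
      apply (div_le_div_iff_of_pos_right hn').mpr
      exact_mod_cast hjk
    have hstep : ∀ k : ℕ, f (k+1) - f k = 1 / n := by
      intro k
      rw [hf]; push_cast; ring
    have hintk : ∀ k : ℕ, k < n →
        IntervalIntegrable m MeasureTheory.volume (f k) (f (k+1)) := by
      intro k hk
      apply hm.mono_set
      rw [Set.uIcc_of_le (hle k (k+1) (Nat.le_succ k)), Set.uIcc_of_le zero_le_one]
      exact Set.Icc_subset_Icc (hpt k (le_of_lt hk)).1 (hpt (k+1) hk).2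
    have hsum : (∫ s in (0:ℝ)..1, m s) =
        ∑ k ∈ Finset.range n, ∫ s in (f k)..(f (k+1)), m s := by
      rw [← hf0, ← hfn]
      exact (intervalIntegral.sum_integral_adjacent_intervals (fun k hk => hintk k hk)).symm
    have hIbound : ∀ k : ℕ, k < n →
        m (f k) * (1/n) ≤ (∫ s in (f k)..(f (k+1)), m s) ∧
        (∫ s in (f k)..(f (k+1)), m s) ≤ m (f (k+1)) * (1/n) := by
      intro k hk
      have hk1 : f k ≤ f (k+1) := hle k (k+1) (Nat.le_succ k)
      have hk01 := hpt k (le_of_lt hk)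
      have hk101 := hpt (k+1) hk
      have hmem : ∀ s ∈ Set.Icc (f k) (f (k+1)), s ∈ Set.Icc (0:ℝ) 1 :=
        fun s hs => ⟨le_trans hk01.1 hs.1, le_trans hs.2 hk101.2⟩
      constructor
      · have := intervalIntegral.integral_mono_on hk1 (intervalIntegrable_const)
          (hintk k hk) (fun s hs => hmono hk01 (hmem s hs) hs.1)
        rwa [intervalIntegral.integral_const, smul_eq_mul, hstep k, mul_comm] at this
      · have := intervalIntegral.integral_mono_on hk1 (hintk k hk)
          (intervalIntegrable_const)
          (fun s hs => hmono (hmem s hs) hk101 hs.2)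
        rwa [intervalIntegral.integral_const, smul_eq_mul, hstep k, mul_comm] at this
    have hφbound : ∀ k : ℕ, k < n →
        m (f k) * (1/n) ≤ φ (f (k+1)) - φ (f k) ∧
        φ (f (k+1)) - φ (f k) ≤ m (f (k+1)) * (1/n) := by
      intro k hk
      have hk01 := hpt k (le_of_lt hk)
      have hk101 := hpt (k+1) hk
      have h1 := h (f k) hk01 (f (k+1)) hk101
      have h2 := h (f (k+1)) hk101 (f k) hk01
      rw [hstep k] at h1
      have hs2 : f k - f (k+1) = -(1/(n:ℝ)) := by linarith [hstep k]
      rw [hs2, mul_neg] at h2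
      constructor <;> linarith
    have hφsum : φ 1 - φ 0 = ∑ k ∈ Finset.range n, (φ (f (k+1)) - φ (f k)) := by
      rw [Finset.sum_range_sub (fun k => φ (f k)), hf0, hfn]
    rw [hsum, hφsum, ← Finset.sum_sub_distrib]
    calc |∑ k ∈ Finset.range n, ((∫ s in (f k)..(f (k+1)), m s) - (φ (f (k+1)) - φ (f k)))|
        ≤ ∑ k ∈ Finset.range n, |(∫ s in (f k)..(f (k+1)), m s) - (φ (f (k+1)) - φ (f k))| :=
          Finset.abs_sum_le_sum_abs _ _
      _ ≤ ∑ k ∈ Finset.range n, (m (f (k+1)) * (1/n) - m (f k) * (1/n)) := by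
          apply Finset.sum_le_sum
          intro k hk
          have hk' := Finset.mem_range.mp hk
          obtain ⟨hI1, hI2⟩ := hIbound k hk'
          obtain ⟨hφ1, hφ2⟩ := hφbound k hk'
          rw [abs_le]
          constructor <;> linarith
      _ = (m 1 - m 0) / n := by
          rw [Finset.sum_range_sub (fun k => m (f k) * (1/n)), hf0, hfn]
          ring
  by_contra hne
  have hδ : 0 < |(∫ s in (0:ℝ)..1, m s) - (φ 1 - φ 0)| := by
    rw [abs_pos, sub_ne_zero]; exact hne
  have hM : 0 ≤ m 1 - m 0 := by
    have := hmono ⟨le_refl _, zero_le_one⟩ ⟨zero_le_one, le_refl _⟩ zero_le_one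
    linarith
  set δ := |(∫ s in (0:ℝ)..1, m s) - (φ 1 - φ 0)| with hδdef
  obtain ⟨n, hn⟩ := exists_nat_gt ((m 1 - m 0) / δ)
  have hn0 : 0 < n := by
    by_contra hn0
    push_neg at hn0
    interval_cases n
    simp at hn
    nlinarith [div_nonneg hM (le_of_lt hδ)]
  have hk := key n hn0
  have hn' : (0:ℝ) < n := Nat.cast_pos.mpr hn0
  have : (m 1 - m 0) / n < δ := by
    rw [div_lt_iff₀ hn']
    rw [div_lt_iff₀ hδ] at hn
    linarith [mul_comm δ (n:ℝ)]
  linarith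

/-- Archer–Kleinberg: on a convex type space in a finite-dimensional real inner product
space, a family of linear maps is a selection of subgradients of a convex function iff
it satisfies local weak monotonicity and path independence (vortex-freeness), the line
integrands being assumed integrable on `[0,1]`. -/
theorem local_wmon_vortex_free_iff_subgradient {E : Type*}
    [NormedAddCommGroup E] [InnerProductSpace ℝ E] [FiniteDimensional ℝ E]
    (T : Set E) (hT : T.Nonempty) (hTconv : Convex ℝ T) (d : E → (E →ₗ[ℝ] ℝ))
    (hInt : ∀ a ∈ T, ∀ b ∈ T,
      IntervalIntegrable (fun s : ℝ => d (a + s • (b - a)) (b - a)) MeasureTheory.volume 0 1) :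
    (∃ G : E → ℝ, ConvexOn ℝ T G ∧ ∀ t ∈ T, ∀ x ∈ T, G t + d t (x - t) ≤ G x) ↔
    ((∀ t ∈ T, ∃ U : Set E, IsOpen U ∧ t ∈ U ∧
        ∀ x ∈ U ∩ T, ∀ x' ∈ U ∩ T, d x (x' - x) ≤ d x' (x' - x)) ∧
      (∀ x ∈ T, ∀ y ∈ T, ∀ z ∈ T,
        (∫ s in (0:ℝ)..1, d (x + s • (y - x)) (y - x)) +
          (∫ s in (0:ℝ)..1, d (y + s • (z - y)) (z - y)) =
          ∫ s in (0:ℝ)..1, d (x + s • (z - x)) (z - x))) := by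
  have hseg : ∀ a ∈ T, ∀ b ∈ T, ∀ s ∈ Set.Icc (0:ℝ) 1, a + s • (b - a) ∈ T := by
    intro a ha b hb s hs
    have := hTconv ha hb (by linarith [hs.2] : (0:ℝ) ≤ 1 - s) hs.1 (by ring)
    have heq : (1 - s) • a + s • b = a + s • (b - a) := by module
    rwa [heq] at this
  constructor
  · rintro ⟨G, hGconv, hGsub⟩
    constructor
    · intro t ht
      refine ⟨Set.univ, isOpen_univ, Set.mem_univ t, ?_⟩
      rintro x ⟨-, hx⟩ x' ⟨-, hx'⟩
      have h1 := hGsub x hx x' hx'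
      have h2 := hGsub x' hx' x hx
      have h3 : d x' (x - x') = - d x' (x' - x) := by
        rw [show x - x' = -(x' - x) by abel, map_neg]
      linarith
    · intro x hx y hy z hz
      have key : ∀ a ∈ T, ∀ b ∈ T,
          (∫ s in (0:ℝ)..1, d (a + s • (b - a)) (b - a)) = G b - G a := by
        intro a ha b hb
        have := AK_integral_eq_of_subgrad (φ := fun s => G (a + s • (b - a)))
          (m := fun s => d (a + s • (b - a)) (b - a)) (hInt a ha b hb) ?_
        · rw [this]
          have e1 : a + (1:ℝ) • (b - a) = b := by module
          have e0 : a + (0:ℝ) • (b - a) = a := by module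
          simp only [e1, e0]
        · intro s hs s' hs'
          have hp := hseg a ha b hb s hs
          have hp' := hseg a ha b hb s' hs'
          have hsub := hGsub _ hp _ hp'
          have heq : (a + s' • (b - a)) - (a + s • (b - a)) = (s' - s) • (b - a) := by
            module
          rw [heq, _root_.map_smul, smul_eq_mul] at hsub
          simpa [mul_comm] using hsub
      rw [key x hx y hy, key y hy z hz, key x hx z hz]
      ring
  · rintro ⟨hW, hV⟩
    obtain ⟨t₀, ht₀⟩ := hT
    set G : E → ℝ := fun x => ∫ s in (0:ℝ)..1, d (t₀ + s • (x - t₀)) (x - t₀) with hG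
    have hsubgrad : ∀ x ∈ T, ∀ y ∈ T, G x + d x (y - x) ≤ G y := by
      intro x hx y hy
      have hdiff : G y - G x = ∫ s in (0:ℝ)..1, d (x + s • (y - x)) (y - x) := by
        have := hV t₀ ht₀ x hx y hy
        simp only [hG]
        linarith
      set m : ℝ → ℝ := fun s => d (x + s • (y - x)) (y - x) with hm
      have hmono : MonotoneOn m (Set.Icc (0:ℝ) 1) := by
        apply AK_monotoneOn_of_locally
        intro c hc
        obtain ⟨U, hUopen, hcU, hWU⟩ := hW (x + c • (y - x)) (hseg x hx y hy c hc)
        have hcont : Continuous (fun s : ℝ => x + s • (y - x)) :=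
          continuous_const.add (continuous_id.smul continuous_const)
        have hpre : IsOpen ((fun s : ℝ => x + s • (y - x)) ⁻¹' U) :=
          hUopen.preimage hcont
        obtain ⟨ε, hε, hball⟩ := Metric.isOpen_iff.mp hpre c hcU
        refine ⟨ε, hε, ?_⟩
        intro u hu v hv hud hvd huv
        have hpu : (x + u • (y - x)) ∈ U := hball (by rwa [Metric.mem_ball, Real.dist_eq])
        have hpv : (x + v • (y - x)) ∈ U := hball (by rwa [Metric.mem_ball, Real.dist_eq])
        have hmain := hWU _ ⟨hpu, hseg x hx y hy u hu⟩ _ ⟨hpv, hseg x hx y hy v hv⟩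
        have heq : (x + v • (y - x)) - (x + u • (y - x)) = (v - u) • (y - x) := by module
        rw [heq, _root_.map_smul, _root_.map_smul, smul_eq_mul, smul_eq_mul] at hmain
        rcases eq_or_lt_of_le huv with rfl | hlt
        · exact le_refl _
        · exact le_of_mul_le_mul_left hmain (by linarith)
      have hge : m 0 ≤ ∫ s in (0:ℝ)..1, m s := by
        have := intervalIntegral.integral_mono_on zero_le_one
          (intervalIntegrable_const (c := m 0)) (hInt x hx y hy)
          (fun s hs => hmono ⟨le_refl _, zero_le_one⟩ hs hs.1)
        rwa [intervalIntegral.integral_const, smul_eq_mul, sub_zero, one_mul] at this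
      have hm0 : m 0 = d x (y - x) := by
        simp [hm]
      rw [hm0] at hge
      have : (∫ s in (0:ℝ)..1, m s) = G y - G x := hdiff.symm
      linarith [this ▸ hge]
    refine ⟨G, ⟨hTconv, ?_⟩, hsubgrad⟩
    intro x hx y hy a b ha hb hab
    have hz : a • x + b • y ∈ T := hTconv hx hy ha hb hab
    have h1 := hsubgrad _ hz x hx
    have h2 := hsubgrad _ hz y hy
    have hb' : b = 1 - a := by linarith
    subst hb'
    have h3 : a • (x - (a • x + (1-a) • y)) + (1-a) • (y - (a • x + (1-a) • y)) = 0 := by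
      module
    have h4 : a * d (a • x + (1-a) • y) (x - (a • x + (1-a) • y))
        + (1-a) * d (a • x + (1-a) • y) (y - (a • x + (1-a) • y)) = 0 := by
      rw [← smul_eq_mul, ← smul_eq_mul, ← _root_.map_smul, ← _root_.map_smul, ← map_add, h3, map_zero]
    have h5 := mul_le_mul_of_nonneg_left h1 ha
    have h6 := mul_le_mul_of_nonneg_left h2 hb
    simp only [smul_eq_mul]
    nlinarith
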